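/- Let (Ω, μ) be a measure space, T > 0, t₀ ∈ [0, T), M ≥ 0, and let c : [0, T] → (Ω → [0,∞)) be a family of measurable functions such that ∫_{{c(t) ≥ 1}} c(t)·log c(t) dμ ≤ M for every t ∈ [0, T]. Suppose that for every integer k ≥ 2 there exists an integrable function v_k with ∫_Ω |min(c(t), k) − v_k| dμ → 0 as t → t₀⁺. Then there exists an integrable function v with ∫_Ω |c(t) − v| dμ → 0 as t → t₀⁺, i.e. c has a right-limit at t₀ in L¹(μ). -/

import Mathlib

open MeasureTheory Real Filter
open scoped ENNReal Topology

private lemma lint_abs_eq_eLpNorm {Ω : Type*} [MeasurableSpace Ω] (μ : Measure Ω)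
    (f g : Ω → ℝ) : ∫⁻ x, ENNReal.ofReal |f x - g x| ∂μ = eLpNorm (f - g) 1 μ := by
  rw [eLpNorm_one_eq_lintegral_enorm]
  simp only [Pi.sub_apply, ← Real.enorm_eq_ofReal_abs]

private lemma tri3 {Ω : Type*} [MeasurableSpace Ω] {μ : Measure Ω}
    {f g h : Ω → ℝ} (hf : AEStronglyMeasurable f μ) (hg : AEStronglyMeasurable g μ)
    (hh : AEStronglyMeasurable h μ) :
    eLpNorm (f - h) 1 μ ≤ eLpNorm (f - g) 1 μ + eLpNorm (g - h) 1 μ := by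
  have hfh : f - h = (f - g) + (g - h) := by ext x; simp
  rw [hfh]
  exact eLpNorm_add_le (hf.sub hg) (hg.sub hh) le_rfl

/-- Right-limits in `L¹` from right-limits of all truncations plus a uniform entropy bound:
if `∫_{{c(t) ≥ 1}} c(t)·log c(t) dμ ≤ M` for all `t ∈ [0,T]`, and for every integer `k ≥ 2`
the truncation `min(c(t), k)` has a right-limit `v_k` in `L¹(μ)` as `t → t₀⁺`, then `c`
itself has a right-limit in `L¹(μ)` as `t → t₀⁺`. -/
theorem right_limit_from_truncations {Ω : Type*} [MeasurableSpace Ω] (μ : Measure Ω)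
    (T : ℝ) (hT : 0 < T) (t₀ : ℝ) (ht₀ : t₀ ∈ Set.Ico 0 T) (M : ℝ) (hM : 0 ≤ M)
    (c : ℝ → Ω → ℝ)
    (hmeas : ∀ t ∈ Set.Icc 0 T, Measurable (c t))
    (hnonneg : ∀ t ∈ Set.Icc 0 T, ∀ x, 0 ≤ c t x)
    (hent : ∀ t ∈ Set.Icc 0 T,
      ∫⁻ x in {x | 1 ≤ c t x}, ENNReal.ofReal (c t x * Real.log (c t x)) ∂μ ≤
        ENNReal.ofReal M)
    (htrunc : ∀ k : ℕ, 2 ≤ k → ∃ v : Ω → ℝ, Integrable v μ ∧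
      Tendsto (fun t => ∫⁻ x, ENNReal.ofReal |min (c t x) (k : ℝ) - v x| ∂μ)
        (nhdsWithin t₀ (Set.Ioi t₀)) (nhds 0)) :
    ∃ v : Ω → ℝ, Integrable v μ ∧
      Tendsto (fun t => ∫⁻ x, ENNReal.ofReal |c t x - v x| ∂μ)
        (nhdsWithin t₀ (Set.Ioi t₀)) (nhds 0) := by
  obtain ⟨ht₀0, ht₀T⟩ := ht₀
  haveI : Fact ((1 : ℝ≥0∞) ≤ 1) := ⟨le_refl 1⟩
  set l := nhdsWithin t₀ (Set.Ioi t₀) with hl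
  -- Step 1: uniform bound on the truncation error
  have key : ∀ k : ℕ, 2 ≤ k → ∀ t ∈ Set.Icc (0:ℝ) T,
      (∫⁻ x, ENNReal.ofReal |c t x - min (c t x) (k : ℝ)| ∂μ) ≤
        ENNReal.ofReal (M / Real.log k) := by
    intro k hk t ht
    have hk1 : (1:ℝ) < (k:ℝ) := by exact_mod_cast hk.trans_lt' one_lt_two
    have hlogk : 0 < Real.log k := Real.log_pos hk1
    set f := c t with hf
    set S : Set Ω := {x | (k:ℝ) ≤ f x} with hS
    have hSmeas : MeasurableSet S := measurableSet_le measurable_const (hmeas t ht)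
    have hbound : ∀ x, ENNReal.ofReal |f x - min (f x) (k:ℝ)| ≤
        S.indicator (fun x => ENNReal.ofReal (f x * Real.log (f x)) *
          (ENNReal.ofReal (Real.log k))⁻¹) x := by
      intro x
      by_cases hx : (k:ℝ) ≤ f x
      · rw [Set.indicator_of_mem (show x ∈ S from hx) ]
        have hminx : min (f x) (k:ℝ) = (k:ℝ) := min_eq_right hx
        have hfx0 : (0:ℝ) ≤ f x := hnonneg t ht x
        have h2 : f x ≤ f x * Real.log (f x) / Real.log k := by
          rw [le_div_iff₀ hlogk]
          exact mul_le_mul_of_nonneg_left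
            (Real.log_le_log (by positivity) hx) hfx0
        have h3 : |f x - min (f x) (k:ℝ)| ≤ f x * Real.log (f x) / Real.log k := by
          rw [hminx, abs_of_nonneg (sub_nonneg.mpr hx)]
          have : f x - (k:ℝ) ≤ f x := by
            have : (0:ℝ) ≤ (k:ℝ) := by positivity
            linarith
          linarith
        calc ENNReal.ofReal |f x - min (f x) (k:ℝ)|
            ≤ ENNReal.ofReal (f x * Real.log (f x) / Real.log k) :=
              ENNReal.ofReal_le_ofReal h3
          _ = ENNReal.ofReal (f x * Real.log (f x)) * (ENNReal.ofReal (Real.log k))⁻¹ := by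
              rw [ENNReal.ofReal_div_of_pos hlogk, div_eq_mul_inv]
      · rw [Set.indicator_of_notMem (show x ∉ S from hx)]
        have : min (f x) (k:ℝ) = f x := min_eq_left (le_of_lt (lt_of_not_ge hx))
        simp [this]
    calc (∫⁻ x, ENNReal.ofReal |f x - min (f x) (k:ℝ)| ∂μ)
        ≤ ∫⁻ x, S.indicator (fun x => ENNReal.ofReal (f x * Real.log (f x)) *
            (ENNReal.ofReal (Real.log k))⁻¹) x ∂μ := lintegral_mono hbound
      _ = ∫⁻ x in S, ENNReal.ofReal (f x * Real.log (f x)) *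
            (ENNReal.ofReal (Real.log k))⁻¹ ∂μ := lintegral_indicator hSmeas _
      _ = (∫⁻ x in S, ENNReal.ofReal (f x * Real.log (f x)) ∂μ) *
            (ENNReal.ofReal (Real.log k))⁻¹ := by
          apply lintegral_mul_const'
          simp [ENNReal.inv_ne_top, ENNReal.ofReal_pos.mpr hlogk,
            (ENNReal.ofReal_pos.mpr hlogk).ne']
      _ ≤ ENNReal.ofReal M * (ENNReal.ofReal (Real.log k))⁻¹ := by
          apply mul_le_mul_left
          refine le_trans (lintegral_mono_set ?_) (hent t ht)
          intro x hx
          exact le_trans (le_trans hk1.le hx) le_rfl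
      _ = ENNReal.ofReal (M / Real.log k) := by
          rw [ENNReal.ofReal_div_of_pos hlogk, div_eq_mul_inv]
  -- the chosen truncation limits
  choose vv hv_int hv_tend using htrunc
  set w : ℕ → Ω → ℝ := fun k => vv (k + 2) (by omega) with hw
  have hw_int : ∀ k, Integrable (w k) μ := fun k => hv_int _ _
  have hw_tend : ∀ k : ℕ, Tendsto
      (fun t => ∫⁻ x, ENNReal.ofReal |min (c t x) (((k+2 : ℕ)) : ℝ) - w k x| ∂μ) l (𝓝 0) :=
    fun k => hv_tend _ _
  have hw_sm : ∀ k, AEStronglyMeasurable (w k) μ := fun k => (hw_int k).1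
  have hmem : ∀ᶠ t in l, t ∈ Set.Ioo t₀ T :=
    Ioo_mem_nhdsGT_of_mem ⟨le_refl t₀, ht₀T⟩
  have hIcc : ∀ t ∈ Set.Ioo t₀ T, t ∈ Set.Icc (0:ℝ) T :=
    fun t ht => ⟨ht₀0.trans ht.1.le, ht.2.le⟩
  -- error constants
  set C : ℕ → ℝ≥0∞ := fun k => ENNReal.ofReal (M / Real.log ((k:ℝ) + 2)) with hC
  have hCk : ∀ k : ℕ, ENNReal.ofReal (M / Real.log (((k + 2 : ℕ)) : ℝ)) = C k := by
    intro k; push_cast; rfl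
  have hC_tend : Tendsto C atTop (𝓝 0) := by
    rw [hC, ← ENNReal.ofReal_zero]
    apply ENNReal.tendsto_ofReal
    apply Tendsto.div_atTop (tendsto_const_nhds (x := M))
    exact Real.tendsto_log_atTop.comp
      (tendsto_atTop_add_const_right _ 2 tendsto_natCast_atTop_atTop)
  have hC_anti : ∀ {n N : ℕ}, N ≤ n → C n ≤ C N := by
    intro n N hNn
    apply ENNReal.ofReal_le_ofReal
    apply div_le_div_of_nonneg_left hM (Real.log_pos (by push_cast; linarith))
    apply Real.log_le_log (by positivity)
    have : (N:ℝ) ≤ (n:ℝ) := Nat.cast_le.mpr hNn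
    linarith
  have hC_ne_top : ∀ k, C k ≠ ⊤ := fun k => ENNReal.ofReal_ne_top
  -- distance between the truncation limits
  have hdist : ∀ k j : ℕ, eLpNorm (w k - w j) 1 μ ≤ C k + C j := by
    intro k j
    have htend : Tendsto (fun t =>
        (∫⁻ x, ENNReal.ofReal |min (c t x) (((k+2:ℕ)):ℝ) - w k x| ∂μ) +
        (∫⁻ x, ENNReal.ofReal |min (c t x) (((j+2:ℕ)):ℝ) - w j x| ∂μ) +
        (C k + C j)) l (𝓝 (0 + 0 + (C k + C j))) :=
      ((hw_tend k).add (hw_tend j)).add tendsto_const_nhds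
    rw [zero_add, zero_add] at htend
    refine ge_of_tendsto htend ?_
    filter_upwards [hmem] with t ht
    have htI := hIcc t ht
    set mk : Ω → ℝ := fun x => min (c t x) (((k+2:ℕ)):ℝ) with hmk
    set mj : Ω → ℝ := fun x => min (c t x) (((j+2:ℕ)):ℝ) with hmj
    have hmk_sm : AEStronglyMeasurable mk μ :=
      ((hmeas t htI).min measurable_const).aestronglyMeasurable
    have hmj_sm : AEStronglyMeasurable mj μ :=
      ((hmeas t htI).min measurable_const).aestronglyMeasurable
    have hc_sm : AEStronglyMeasurable (c t) μ := (hmeas t htI).aestronglyMeasurable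
    have t1 : eLpNorm (w k - w j) 1 μ ≤
        eLpNorm (w k - mk) 1 μ + eLpNorm (mk - mj) 1 μ + eLpNorm (mj - w j) 1 μ := by
      refine le_trans (tri3 (hw_sm k) hmk_sm (hw_sm j)) ?_
      have := tri3 (μ := μ) hmk_sm hmj_sm (hw_sm j)
      calc eLpNorm (w k - mk) 1 μ + eLpNorm (mk - w j) 1 μ
          ≤ eLpNorm (w k - mk) 1 μ + (eLpNorm (mk - mj) 1 μ + eLpNorm (mj - w j) 1 μ) :=
            add_le_add_right this _
        _ = _ := by ring
    have t2 : eLpNorm (mk - mj) 1 μ ≤ C k + C j := by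
      refine le_trans (tri3 hmk_sm hc_sm hmj_sm) ?_
      have e1 : eLpNorm (mk - c t) 1 μ ≤ C k := by
        rw [← lint_abs_eq_eLpNorm, ← hCk k]
        refine le_trans (le_of_eq ?_) (key (k+2) (by omega) t htI)
        congr 1; ext x; rw [abs_sub_comm]
      have e2 : eLpNorm (c t - mj) 1 μ ≤ C j := by
        rw [← lint_abs_eq_eLpNorm, ← hCk j]
        exact key (j+2) (by omega) t htI
      exact add_le_add e1 e2
    have e3 : eLpNorm (w k - mk) 1 μ =
        ∫⁻ x, ENNReal.ofReal |min (c t x) (((k+2:ℕ)):ℝ) - w k x| ∂μ := by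
      rw [eLpNorm_sub_comm, ← lint_abs_eq_eLpNorm]
    have e4 : eLpNorm (mj - w j) 1 μ =
        ∫⁻ x, ENNReal.ofReal |min (c t x) (((j+2:ℕ)):ℝ) - w j x| ∂μ := by
      rw [← lint_abs_eq_eLpNorm]
    calc eLpNorm (w k - w j) 1 μ
        ≤ eLpNorm (w k - mk) 1 μ + eLpNorm (mk - mj) 1 μ + eLpNorm (mj - w j) 1 μ := t1
      _ ≤ eLpNorm (w k - mk) 1 μ + (C k + C j) + eLpNorm (mj - w j) 1 μ := by
          gcongr
      _ = (∫⁻ x, ENNReal.ofReal |min (c t x) (((k+2:ℕ)):ℝ) - w k x| ∂μ) +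
          (∫⁻ x, ENNReal.ofReal |min (c t x) (((j+2:ℕ)):ℝ) - w j x| ∂μ) +
          (C k + C j) := by rw [e3, e4]; ring
  -- Cauchy sequence in L¹
  set W : ℕ → Lp ℝ 1 μ := fun k => (memLp_one_iff_integrable.mpr (hw_int k)).toLp (w k) with hW
  have hWdist : ∀ k j, dist (W k) (W j) ≤ (C k).toReal + (C j).toReal := by
    intro k j
    rw [Lp.dist_def]
    have he : eLpNorm (⇑(W k) - ⇑(W j)) 1 μ = eLpNorm (w k - w j) 1 μ := by
      apply eLpNorm_congr_ae
      filter_upwards [(memLp_one_iff_integrable.mpr (hw_int k)).coeFn_toLp,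
        (memLp_one_iff_integrable.mpr (hw_int j)).coeFn_toLp] with x h1 h2
      simp [hW, h1, h2]
    rw [he]
    rw [← ENNReal.toReal_add (hC_ne_top k) (hC_ne_top j)]
    exact ENNReal.toReal_mono (by simp [hC_ne_top k, hC_ne_top j,
      ENNReal.add_ne_top]) (hdist k j)
  have hcauchy : CauchySeq W := by
    apply cauchySeq_of_le_tendsto_0 (fun N => (C N).toReal + (C N).toReal)
    · intro n m N hn hm
      refine le_trans (hWdist n m) ?_
      exact add_le_add (ENNReal.toReal_mono (hC_ne_top N) (hC_anti hn))
        (ENNReal.toReal_mono (hC_ne_top N) (hC_anti hm))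
    · have : Tendsto (fun N => (C N).toReal) atTop (𝓝 0) := by
        rw [← ENNReal.toReal_zero]
        exact (ENNReal.tendsto_toReal ENNReal.zero_ne_top).comp hC_tend
      simpa using this.add this
  obtain ⟨V, hV⟩ := cauchySeq_tendsto_of_complete hcauchy
  refine ⟨⇑V, L1.integrable_coeFn V, ?_⟩
  have hVt : Tendsto (fun k => eLpNorm (w k - ⇑V) 1 μ) atTop (𝓝 0) := by
    have := (Lp.tendsto_Lp_iff_tendsto_eLpNorm' W V).mp hV
    refine this.congr fun k => ?_
    apply eLpNorm_congr_ae
    filter_upwards [(memLp_one_iff_integrable.mpr (hw_int k)).coeFn_toLp] with x h1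
    simp [hW, h1]
  -- final convergence
  rw [ENNReal.tendsto_nhds_zero]
  intro ε hε
  have hε3 : (0:ℝ≥0∞) < ε / 3 := ENNReal.div_pos hε.ne' (by norm_num)
  obtain ⟨k, hk1, hk2⟩ := ((hC_tend.eventually_lt_const hε3).and
    (hVt.eventually_lt_const hε3)).exists
  filter_upwards [hmem, (hw_tend k).eventually_le_const hε3] with t ht hA
  have htI := hIcc t ht
  set mk : Ω → ℝ := fun x => min (c t x) (((k+2:ℕ)):ℝ) with hmk
  have hmk_sm : AEStronglyMeasurable mk μ :=
    ((hmeas t htI).min measurable_const).aestronglyMeasurable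
  have hc_sm : AEStronglyMeasurable (c t) μ := (hmeas t htI).aestronglyMeasurable
  have hV_sm : AEStronglyMeasurable (⇑V) μ := (Lp.memLp V).1
  calc (∫⁻ x, ENNReal.ofReal |c t x - V x| ∂μ)
      = eLpNorm (c t - ⇑V) 1 μ := lint_abs_eq_eLpNorm μ _ _
    _ ≤ eLpNorm (c t - mk) 1 μ + eLpNorm (mk - w k) 1 μ + eLpNorm (w k - ⇑V) 1 μ := by
        refine le_trans (tri3 hc_sm hmk_sm hV_sm) ?_
        have := tri3 (μ := μ) hmk_sm (hw_sm k) hV_sm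
        calc eLpNorm (c t - mk) 1 μ + eLpNorm (mk - ⇑V) 1 μ
            ≤ eLpNorm (c t - mk) 1 μ + (eLpNorm (mk - w k) 1 μ + eLpNorm (w k - ⇑V) 1 μ) :=
              add_le_add_right this _
          _ = _ := by ring
    _ ≤ ε / 3 + ε / 3 + ε / 3 := by
        have h1 : eLpNorm (c t - mk) 1 μ ≤ ε / 3 := by
          rw [← lint_abs_eq_eLpNorm]
          exact le_trans (le_trans (key (k+2) (by omega) t htI) (le_of_eq (hCk k))) hk1.le
        have h2 : eLpNorm (mk - w k) 1 μ ≤ ε / 3 := by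
          rw [← lint_abs_eq_eLpNorm]; exact hA
        exact add_le_add (add_le_add h1 h2) hk2.le
    _ = ε := ENNReal.add_thirds ε
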